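/- arXiv:2205.04558 — 2 statements merged into one kernel-verified Lean document; each statement's English description precedes it below -/
import Mathlib

section
/- The isomorphism $R_{S,B}: (M_S B)\rtimes G \to M_{|S|}(B\rtimes G)$ given by $R_{S,B}((e_{s,t}\otimes b)\rtimes g) = e_{s,g^{-1}t}\otimes(b\rtimes g)$ is natural in $S$ with respect to injective morphisms of $G$-sets and natural in $B$ with respect to $G$-equivariant algebra homomorphisms. -/
/-!
Statement 3: the isomorphism `R_{S,B} : (M_S B) ⋊ G ≅ M_{|S|}(B ⋊ G)` is
natural in `S` with respect to injective morphisms of `G`-sets and natural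
in `B` with respect to `G`-equivariant algebra homomorphisms.
-/

/-- The map `R_{S,B}`: `(e_{s,t} ⊗ b) ⋊ g ↦ e_{s,g⁻¹t} ⊗ (b ⋊ g)`. -/
noncomputable def Rmap {G S B : Type} [Group G] [MulAction G S] [AddCommMonoid B]
    (x : G →₀ ((S × S) →₀ B)) : (S × S) →₀ (G →₀ B) :=
  x.sum fun g m => m.sum fun p b =>
    Finsupp.single (p.1, g⁻¹ • p.2) (Finsupp.single g b)

/-- The map on finitely supported matrices induced by a map of index sets:
`e_{s,t} ⊗ x ↦ e_{f s, f t} ⊗ x`. -/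
noncomputable def matMap {S S' R : Type} [AddCommMonoid R] (f : S → S')
    (m : (S × S) →₀ R) : (S' × S') →₀ R :=
  m.sum fun p x => Finsupp.single (f p.1, f p.2) x

/-- The map `(M_S B) ⋊ G → (M_{S'} B) ⋊ G` induced by `f : S → S'`. -/
noncomputable def cpMatMap {G S S' B : Type} [AddCommMonoid B] (f : S → S')
    (x : G →₀ ((S × S) →₀ B)) : G →₀ ((S' × S') →₀ B) :=
  x.sum fun g m => Finsupp.single g (matMap f m)

/-- The map `(M_S B) ⋊ G → (M_S B') ⋊ G` induced by `φ : B → B'`. -/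
noncomputable def cpCoeffMap {G S B B' : Type} [AddCommMonoid B]
    [AddCommMonoid B'] (φ : B → B') (x : G →₀ ((S × S) →₀ B)) :
    G →₀ ((S × S) →₀ B') :=
  x.sum fun g m => Finsupp.single g (m.sum fun p b => Finsupp.single p (φ b))

/-- The map `(B ⋊ G) → (B' ⋊ G)` induced by `φ : B → B'`. -/
noncomputable def entryMap {G B B' : Type} [AddCommMonoid B] [AddCommMonoid B']
    (φ : B → B') (e : G →₀ B) : G →₀ B' :=
  e.sum fun g b => Finsupp.single g (φ b)

/-- The map `M_{|S|}(B ⋊ G) → M_{|S|}(B' ⋊ G)` induced by `φ : B → B'`. -/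
noncomputable def matEntryMap {G S B B' : Type} [AddCommMonoid B]
    [AddCommMonoid B'] (φ : B → B') (m : (S × S) →₀ (G →₀ B)) :
    (S × S) →₀ (G →₀ B') :=
  m.sum fun p e => Finsupp.single p (entryMap φ e)

section Aux

variable {G S S' B B' : Type} [Group G] [MulAction G S] [MulAction G S']
  [AddCommMonoid B] [AddCommMonoid B']

lemma Rmap_zero : Rmap (0 : G →₀ ((S × S) →₀ B)) = 0 := by
  simp [Rmap]

lemma Rmap_add (x y : G →₀ ((S × S) →₀ B)) :
    Rmap (x + y) = Rmap x + Rmap y := by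
  unfold Rmap
  refine Finsupp.sum_add_index' (fun g => by simp) (fun g m m' => ?_)
  exact Finsupp.sum_add_index' (fun p => by simp) (fun p b b' => by
    simp [Finsupp.single_add])

lemma Rmap_single (g : G) (p : S × S) (b : B) :
    Rmap (Finsupp.single g (Finsupp.single p b))
      = Finsupp.single (p.1, g⁻¹ • p.2) (Finsupp.single g b) := by
  unfold Rmap
  rw [Finsupp.sum_single_index (by simp), Finsupp.sum_single_index (by simp)]

lemma matMap_zero (f : S → S') : matMap f (0 : (S × S) →₀ B) = 0 := by
  simp [matMap]

lemma matMap_add (f : S → S') (m m' : (S × S) →₀ B) :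
    matMap f (m + m') = matMap f m + matMap f m' :=
  Finsupp.sum_add_index' (fun p => by simp) (fun p b b' => by
    simp [Finsupp.single_add])

lemma matMap_single (f : S → S') (p : S × S) (b : B) :
    matMap f (Finsupp.single p b) = Finsupp.single (f p.1, f p.2) b := by
  unfold matMap
  rw [Finsupp.sum_single_index (by simp)]

lemma cpMatMap_add (f : S → S') (x y : G →₀ ((S × S) →₀ B)) :
    cpMatMap f (x + y) = cpMatMap f x + cpMatMap f y :=
  Finsupp.sum_add_index' (fun g => by simp [matMap_zero])
    (fun g m m' => by simp [matMap_add, Finsupp.single_add])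

lemma cpMatMap_single (f : S → S') (g : G) (m : (S × S) →₀ B) :
    cpMatMap f (Finsupp.single g m) = Finsupp.single g (matMap f m) := by
  unfold cpMatMap
  rw [Finsupp.sum_single_index (by simp [matMap_zero])]

lemma cpCoeffMap_add (φ : B →+ B') (x y : G →₀ ((S × S) →₀ B)) :
    cpCoeffMap (⇑φ) (x + y) = cpCoeffMap (⇑φ) x + cpCoeffMap (⇑φ) y := by
  refine Finsupp.sum_add_index' (fun g => by simp) (fun g m m' => ?_)
  rw [← Finsupp.single_add]
  congr 1
  exact Finsupp.sum_add_index' (fun p => by simp) (fun p b b' => by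
    simp [Finsupp.single_add])

lemma cpCoeffMap_single (φ : B →+ B') (g : G) (p : S × S) (b : B) :
    cpCoeffMap (⇑φ) (Finsupp.single g (Finsupp.single p b))
      = Finsupp.single g (Finsupp.single p (φ b)) := by
  unfold cpCoeffMap
  rw [Finsupp.sum_single_index (by simp)]
  congr 1
  rw [Finsupp.sum_single_index (by simp)]

lemma entryMap_zero (φ : B →+ B') : entryMap (⇑φ) (0 : G →₀ B) = 0 := by
  simp [entryMap]

lemma entryMap_add (φ : B →+ B') (e e' : G →₀ B) :
    entryMap (⇑φ) (e + e') = entryMap (⇑φ) e + entryMap (⇑φ) e' :=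
  Finsupp.sum_add_index' (fun g => by simp) (fun g b b' => by
    simp [Finsupp.single_add])

lemma entryMap_single (φ : B →+ B') (g : G) (b : B) :
    entryMap (⇑φ) (Finsupp.single g b) = Finsupp.single g (φ b) := by
  unfold entryMap
  rw [Finsupp.sum_single_index (by simp)]

lemma matEntryMap_add (φ : B →+ B') (m m' : (S × S) →₀ (G →₀ B)) :
    matEntryMap (⇑φ) (m + m')
      = matEntryMap (⇑φ) m + matEntryMap (⇑φ) m' :=
  Finsupp.sum_add_index' (fun p => by simp [entryMap_zero])
    (fun p e e' => by simp [entryMap_add, Finsupp.single_add])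

lemma matEntryMap_single (φ : B →+ B') (p : S × S) (e : G →₀ B) :
    matEntryMap (⇑φ) (Finsupp.single p e) = Finsupp.single p (entryMap (⇑φ) e) := by
  unfold matEntryMap
  rw [Finsupp.sum_single_index (by simp [entryMap_zero])]

lemma part1_single (f : S → S') (hfe : ∀ (g : G) (s : S), f (g • s) = g • f s)
    (g : G) (m : (S × S) →₀ B) :
    Rmap (Finsupp.single g (matMap f m)) = matMap f (Rmap (Finsupp.single g m)) := by
  induction m using Finsupp.induction with
  | zero => simp [matMap_zero, Rmap_zero]
  | single_add p b m _ _ ihm =>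
    rw [matMap_add, Finsupp.single_add, Rmap_add, Finsupp.single_add, Rmap_add,
      matMap_add, ihm, matMap_single, Rmap_single, Rmap_single, matMap_single]
    simp [hfe]

lemma part2_single (φ : B →+ B') (g : G) (m : (S × S) →₀ B) :
    Rmap (cpCoeffMap (⇑φ) (Finsupp.single g m))
      = matEntryMap (⇑φ) (Rmap (Finsupp.single g m)) := by
  induction m using Finsupp.induction with
  | zero => rw [Finsupp.single_zero, Rmap_zero]
            simp [Rmap, cpCoeffMap, matEntryMap]
  | single_add p b m _ _ ihm =>
    rw [Finsupp.single_add, cpCoeffMap_add, Rmap_add, Rmap_add,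
      matEntryMap_add, ihm, cpCoeffMap_single, Rmap_single, Rmap_single,
      matEntryMap_single, entryMap_single]

end Aux

/-- Naturality of `R_{S,B}` in `S` (w.r.t. injective
morphisms of `G`-sets) and in `B` (w.r.t. `G`-equivariant algebra
homomorphisms). -/
theorem stmt3 {ℓ G S S' B B' : Type} [CommRing ℓ] [Group G]
    [MulAction G S] [MulAction G S']
    [NonUnitalNonAssocSemiring B] [Module ℓ B] [DistribMulAction G B]
    [NonUnitalNonAssocSemiring B'] [Module ℓ B'] [DistribMulAction G B']
    (f : S → S') (hf : Function.Injective f)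
    (hfe : ∀ (g : G) (s : S), f (g • s) = g • f s)
    (φ : B →+ B') (hφmul : ∀ a b : B, φ (a * b) = φ a * φ b)
    (hφlin : ∀ (c : ℓ) (b : B), φ (c • b) = c • φ b)
    (hφact : ∀ (g : G) (b : B), φ (g • b) = g • φ b) :
    (∀ x : G →₀ ((S × S) →₀ B), Rmap (cpMatMap f x) = matMap f (Rmap x)) ∧
    (∀ x : G →₀ ((S × S) →₀ B),
      Rmap (cpCoeffMap (⇑φ) x) = matEntryMap (⇑φ) (Rmap x)) := by
  constructor
  · intro x
    induction x using Finsupp.induction with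
    | zero => simp [Rmap_zero, matMap_zero, cpMatMap_add, cpMatMap_single]
              simp [cpMatMap, Rmap, matMap]
    | single_add g m x _ _ ih =>
      rw [cpMatMap_add, Rmap_add, Rmap_add, matMap_add, ih, cpMatMap_single,
        part1_single f hfe]
  · intro x
    induction x using Finsupp.induction with
    | zero => rw [Rmap_zero]
              simp [Rmap, cpCoeffMap, matEntryMap]
    | single_add g m x _ _ ih =>
      rw [cpCoeffMap_add, Rmap_add, Rmap_add, matEntryMap_add, ih,
        part2_single]
end

section
/- Let $G$ be a group, $H \subseteq G$ a subgroup, and $B$ a $G$-algebra. Fix a section $s: G/H \to G$ of the projection with $s(H) = e$, and write $\hat g = s(gH)$. Then the map $\alpha: \mathcal{A}(B \rtimes G/H) \to M_{|G/H|}(B \rtimes H)$ defined on $b\otimes g \in (B\rtimes G/H)(sH, tH) = B \otimes \ell[tHs^{-1}]$ by $\alpha(b\otimes g) = e_{tH, sH} \otimes (\hat t^{-1}\cdot b) \rtimes \hat t^{-1} g \hat s$ is an isomorphism of $\ell$-algebras. -/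
/-!
Statement 9: the map `α : 𝒜(B ⋊ G/H) → M_{|G/H|}(B ⋊ H)` given on a
generator `b ⊗ g ∈ (B ⋊ G/H)(sH, tH)` by
`α(b ⊗ g) = e_{tH,sH} ⊗ (t̂⁻¹·b) ⋊ t̂⁻¹ g ŝ` is an isomorphism of
`ℓ`-algebras (for a chosen section `s` of `G → G/H` with `s(H) = e`).

The hom-module `(B ⋊ G/H)(x, y) = B ⊗ ℓ[yHx⁻¹]` is modeled as
`{g : G // g • x = y} →₀ B`; `𝒜` as a dependent direct sum over pairs of
objects, `B ⋊ H` as `↥H →₀ B`, and matrices as `(G/H × G/H) →₀ (↥H →₀ B)`.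
-/

open scoped Classical

set_option maxHeartbeats 1000000

variable {ℓ G B : Type} [CommRing ℓ] [Group G]
variable [NonUnitalNonAssocSemiring B] [Module ℓ B] [DistribMulAction G B]

/-- The hom-module `(B ⋊ G/H)(x,y) = B ⊗ ℓ[yHx⁻¹]`. -/
abbrev HomMod (H : Subgroup G) (B : Type) [AddCommMonoid B] (x y : G ⧸ H) :=
  {g : G // g • x = y} →₀ B

/-- Composition in the category `B ⋊ G/H`:
`(b ⊗ g) ∘ (b' ⊗ g') = b (g·b') ⊗ g g'`. -/
noncomputable def catComp {H : Subgroup G} {x y z : G ⧸ H}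
    (m2 : HomMod H B y z) (m1 : HomMod H B x y) : HomMod H B x z :=
  m2.sum fun g b => m1.sum fun g' b' =>
    Finsupp.single ⟨g.1 * g'.1, by rw [mul_smul, g'.2]; exact g.2⟩
      (b * (g.1 • b'))

/-- `𝒜(B ⋊ G/H) = ⊕_{x,y} (B ⋊ G/H)(x,y)`. -/
def ACat (H : Subgroup G) (B : Type) [AddCommMonoid B] :=
  Π₀ p : (G ⧸ H) × (G ⧸ H), HomMod H B p.1 p.2

noncomputable instance (H : Subgroup G) : AddCommMonoid (ACat H B) :=
  inferInstanceAs (AddCommMonoid (Π₀ p : (G ⧸ H) × (G ⧸ H), HomMod H B p.1 p.2))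

noncomputable instance (H : Subgroup G) : Module ℓ (ACat H B) :=
  inferInstanceAs (Module ℓ (Π₀ p : (G ⧸ H) × (G ⧸ H), HomMod H B p.1 p.2))

/-- Multiplication of `𝒜(B ⋊ G/H)`. -/
noncomputable def amul {H : Subgroup G} (a b : ACat H B) : ACat H B :=
  DFinsupp.sum a fun p m => DFinsupp.sum b fun q m' =>
    if h : q.2 = p.1 then
      DFinsupp.single (q.1, p.2) (catComp m (h ▸ m')) else 0

/-- The crossed product multiplication of `B ⋊ H`. -/
noncomputable def hcMul {H : Subgroup G} (e f : (↥H) →₀ B) : (↥H) →₀ B :=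
  e.sum fun h b => f.sum fun h' b' =>
    Finsupp.single (h * h') (b * ((h : G) • b'))

/-- Matrix multiplication on `(S × S) →₀ R` for a multiplication on `R`. -/
noncomputable def matMulGen {S R : Type} [AddCommMonoid R] (mulR : R → R → R)
    (a b : (S × S) →₀ R) : (S × S) →₀ R :=
  a.sum fun p x => b.sum fun q y =>
    if p.2 = q.1 then Finsupp.single (p.1, q.2) (mulR x y) else 0

theorem section_mem {H : Subgroup G} (s : G ⧸ H → G)
    (hs : ∀ x, QuotientGroup.mk (s x) = x) {x y : G ⧸ H}
    (g : {g : G // g • x = y}) : (s y)⁻¹ * g.1 * s x ∈ H := by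
  have h1 : (QuotientGroup.mk (s y) : G ⧸ H) = QuotientGroup.mk (g.1 * s x) := by
    have h2 : g.1 • (QuotientGroup.mk (s x) : G ⧸ H) = QuotientGroup.mk (g.1 * s x) := rfl
    rw [hs, ← h2, hs]
    exact g.2.symm
  have := QuotientGroup.eq.mp h1
  rwa [← mul_assoc] at this

/-- The map `α : 𝒜(B ⋊ G/H) → M_{|G/H|}(B ⋊ H)`:
`b ⊗ g ∈ Hom(sH, tH) ↦ e_{tH,sH} ⊗ (t̂⁻¹ · b) ⋊ (t̂⁻¹ g ŝ)`. -/
noncomputable def alphaMap {H : Subgroup G} (s : G ⧸ H → G)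
    (hs : ∀ x, QuotientGroup.mk (s x) = x) (a : ACat H B) :
    ((G ⧸ H) × (G ⧸ H)) →₀ ((↥H) →₀ B) :=
  DFinsupp.sum a fun p m => m.sum fun g b =>
    Finsupp.single (p.2, p.1)
      (Finsupp.single ⟨(s p.2)⁻¹ * g.1 * s p.1, section_mem s hs g⟩
        ((s p.2)⁻¹ • b))

/-! ### Auxiliary lemmas -/

/-- `DFinsupp.single` with its type stated as `ACat`. -/
noncomputable abbrev ACat.single {H : Subgroup G} (i : (G ⧸ H) × (G ⧸ H)) (b : HomMod H B i.1 i.2) :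
    ACat H B :=
  DFinsupp.single i b

lemma ACat.single_add {H : Subgroup G} (i : (G ⧸ H) × (G ⧸ H)) (b b' : HomMod H B i.1 i.2) :
    @Eq (ACat H B) (DFinsupp.single i (b + b')) (ACat.single i b + ACat.single i b') :=
  DFinsupp.single_add (β := fun q : (G ⧸ H) × (G ⧸ H) => HomMod H B q.1 q.2) i b b'

lemma ACat.single_zero {H : Subgroup G} (i : (G ⧸ H) × (G ⧸ H)) :
    @Eq (ACat H B) (DFinsupp.single i 0) 0 :=
  DFinsupp.single_zero i

lemma ACat.induction {H : Subgroup G} {p : ACat H B → Prop} (a : ACat H B) (h0 : p 0)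
    (ha : ∀ (i : (G ⧸ H) × (G ⧸ H)) (b : HomMod H B i.1 i.2) (f : ACat H B),
      (id (α := Π₀ q : (G ⧸ H) × (G ⧸ H), HomMod H B q.1 q.2) f) i = 0 → b ≠ 0 → p f →
      p (ACat.single i b + f)) : p a :=
  DFinsupp.induction a h0 ha

section Helpers
variable {H : Subgroup G}

/-- Congruence for `DFinsupp.sum`. -/
lemma dsum_congr {ι : Type} {β : ι → Type} [DecidableEq ι] [∀ i, Zero (β i)]
    [∀ i (x : β i), Decidable (x ≠ 0)]
    {γ : Type} [AddCommMonoid γ] (f : Π₀ i, β i) {g₁ g₂ : ∀ i, β i → γ}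
    (h : ∀ i, g₁ i (f i) = g₂ i (f i)) : f.sum g₁ = f.sum g₂ :=
  Finset.sum_congr rfl fun i _ => h i

lemma fsingle_congr {ι M : Type} [AddCommMonoid M] {i j : ι} {x y : M}
    (hij : i = j) (hxy : x = y) : Finsupp.single i x = Finsupp.single j y := by
  subst hij; subst hxy; rfl

lemma catComp_zero_left {x y z : G ⧸ H} (m : HomMod H B x y) :
    catComp (0 : HomMod H B y z) m = 0 := by
  simp [catComp]

lemma catComp_zero_right {x y z : G ⧸ H} (m : HomMod H B y z) :
    catComp m (0 : HomMod H B x y) = 0 := by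
  simp [catComp]

lemma catComp_single_single {x y z : G ⧸ H} (g : {g : G // g • y = z})
    (g' : {g : G // g • x = y}) (b b' : B) :
    catComp (B := B) (Finsupp.single g b) (Finsupp.single g' b')
      = Finsupp.single ⟨g.1 * g'.1, by rw [mul_smul, g'.2]; exact g.2⟩
        (b * (g.1 • b')) := by
  unfold catComp
  rw [Finsupp.sum_single_index, Finsupp.sum_single_index]
  · simp
  · simp [zero_mul, Finsupp.single_zero]

lemma catComp_add_left {x y z : G ⧸ H} (m m' : HomMod H B y z) (n : HomMod H B x y) :
    catComp (m + m') n = catComp m n + catComp m' n := by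
  unfold catComp
  apply Finsupp.sum_add_index' <;> intros <;>
    simp [add_mul, Finsupp.single_add, Finsupp.sum_add]

lemma catComp_add_right {x y z : G ⧸ H} (m : HomMod H B y z) (n n' : HomMod H B x y) :
    catComp m (n + n') = catComp m n + catComp m n' := by
  unfold catComp
  rw [← Finsupp.sum_add]
  refine Finsupp.sum_congr fun g _ => ?_
  apply Finsupp.sum_add_index' <;> intros <;>
    simp [mul_add, smul_add, Finsupp.single_add]

end Helpers

section Alpha
variable {H : Subgroup G} (s : G ⧸ H → G) (hs : ∀ x, QuotientGroup.mk (s x) = x)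

lemma alpha_zero : alphaMap (B := B) s hs 0 = 0 := by
  unfold alphaMap
  exact DFinsupp.sum_zero_index

lemma alpha_single (p : (G ⧸ H) × (G ⧸ H)) (g : {g : G // g • p.1 = p.2}) (b : B) :
    alphaMap s hs (DFinsupp.single p (Finsupp.single g b))
      = Finsupp.single (p.2, p.1)
          (Finsupp.single ⟨(s p.2)⁻¹ * g.1 * s p.1, section_mem s hs g⟩
            ((s p.2)⁻¹ • b)) := by
  unfold alphaMap
  rw [DFinsupp.sum_single_index, Finsupp.sum_single_index]
  · simp
  · exact Finsupp.sum_zero_index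

lemma alpha_add (a b : ACat H B) :
    alphaMap s hs (a + b) = alphaMap s hs a + alphaMap s hs b := by
  unfold alphaMap
  apply DFinsupp.sum_add_index
  · intro p; exact Finsupp.sum_zero_index
  · intro p m m'
    apply Finsupp.sum_add_index' <;> intros <;> simp [smul_add, Finsupp.single_add]

lemma alpha_single_mem (p : (G ⧸ H) × (G ⧸ H)) (m : HomMod H B p.1 p.2) :
    alphaMap s hs (DFinsupp.single p m)
      = m.sum fun g b =>
          Finsupp.single (p.2, p.1)
            (Finsupp.single ⟨(s p.2)⁻¹ * g.1 * s p.1, section_mem s hs g⟩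
              ((s p.2)⁻¹ • b)) := by
  unfold alphaMap
  rw [DFinsupp.sum_single_index]
  exact Finsupp.sum_zero_index

lemma alpha_smul (hact : ∀ (g : G) (c : ℓ) (b : B), g • (c • b) = c • (g • b))
    (c : ℓ) (a : ACat H B) :
    alphaMap s hs (c • a) = c • alphaMap s hs a := by
  induction a using ACat.induction with
  | h0 => simp [alpha_zero]
  | ha p m f hf hm ih =>
    rw [smul_add, alpha_add, alpha_add, smul_add, ih]
    congr 1
    have h1 : c • ACat.single p m = ACat.single p (c • m) :=
      (DFinsupp.single_smul (β := fun q : (G ⧸ H) × (G ⧸ H) => HomMod H B q.1 q.2) c m).symm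
    rw [h1, alpha_single_mem, alpha_single_mem]
    rw [Finsupp.smul_sum]
    rw [Finsupp.sum_smul_index']
    · refine Finsupp.sum_congr fun g _ => ?_
      simp [hact, Finsupp.smul_single]
    · intro g; simp

end Alpha

section Beta
variable {H : Subgroup G}

theorem section_mem_inv (s : G ⧸ H → G) (hs : ∀ x, QuotientGroup.mk (s x) = x)
    {x y : G ⧸ H} (h : ↥H) :
    (s y * (h : G) * (s x)⁻¹) • x = y := by
  have h2 : (s y * (h : G) * (s x)⁻¹) • (QuotientGroup.mk (s x) : G ⧸ H)
      = QuotientGroup.mk (s y * (h : G) * (s x)⁻¹ * s x) := rfl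
  calc (s y * (h : G) * (s x)⁻¹) • x
      = (s y * (h : G) * (s x)⁻¹) • (QuotientGroup.mk (s x) : G ⧸ H) := by rw [hs]
    _ = QuotientGroup.mk (s y * (h : G) * (s x)⁻¹ * s x) := h2
    _ = y := by rw [inv_mul_cancel_right, QuotientGroup.mk_mul_of_mem _ h.2, hs]

/-- The inverse of `alphaMap`. -/
noncomputable def betaMap (s : G ⧸ H → G) (hs : ∀ x, QuotientGroup.mk (s x) = x)
    (M : ((G ⧸ H) × (G ⧸ H)) →₀ ((↥H) →₀ B)) : ACat H B :=
  M.sum fun p e => e.sum fun h b =>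
    DFinsupp.single (p.2, p.1)
      (Finsupp.single ⟨s p.1 * (h : G) * (s p.2)⁻¹, section_mem_inv s hs h⟩
        ((s p.1) • b))

variable (s : G ⧸ H → G) (hs : ∀ x, QuotientGroup.mk (s x) = x)

lemma beta_zero : betaMap (B := B) s hs 0 = 0 := Finsupp.sum_zero_index

lemma beta_add (M N : ((G ⧸ H) × (G ⧸ H)) →₀ ((↥H) →₀ B)) :
    betaMap s hs (M + N) = betaMap s hs M + betaMap s hs N := by
  unfold betaMap
  apply Finsupp.sum_add_index' <;> intros <;>
    first
      | exact Finsupp.sum_zero_index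
      | apply Finsupp.sum_add_index' <;> intros <;>
          simp [smul_add, Finsupp.single_add, DFinsupp.single_add] <;> rfl

lemma beta_single (p : (G ⧸ H) × (G ⧸ H)) (h : ↥H) (b : B) :
    betaMap s hs (Finsupp.single p (Finsupp.single h b))
      = DFinsupp.single (p.2, p.1)
          (Finsupp.single ⟨s p.1 * (h : G) * (s p.2)⁻¹, section_mem_inv s hs h⟩
            ((s p.1) • b)) := by
  unfold betaMap
  erw [Finsupp.sum_single_index, Finsupp.sum_single_index]
  · simp; rfl
  · exact Finsupp.sum_zero_index

lemma beta_alpha_single (p : (G ⧸ H) × (G ⧸ H)) (m : HomMod H B p.1 p.2) :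
    betaMap s hs (alphaMap s hs (DFinsupp.single p m)) = DFinsupp.single p m := by
  induction m using Finsupp.induction with
  | zero => rw [ACat.single_zero, alpha_zero, beta_zero]
  | single_add g b m hgm hb ih =>
    have key : betaMap s hs (alphaMap s hs (DFinsupp.single p (Finsupp.single g b)))
        = DFinsupp.single p (Finsupp.single g b) := by
      rw [alpha_single, beta_single]
      refine congrArg _ (fsingle_congr ?_ ?_)
      · exact Subtype.ext (by simp; group)
      · exact smul_inv_smul _ _
    rw [ACat.single_add, alpha_add, beta_add, ih, key]

lemma beta_alpha (a : ACat H B) : betaMap s hs (alphaMap s hs a) = a := by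
  induction a using ACat.induction with
  | h0 => rw [alpha_zero, beta_zero]
  | ha p m f hf hm ih =>
    rw [alpha_add, beta_add, ih, beta_alpha_single]

lemma alpha_beta_single (p : (G ⧸ H) × (G ⧸ H)) (e : (↥H) →₀ B) :
    alphaMap s hs (betaMap s hs (Finsupp.single p e)) = Finsupp.single p e := by
  induction e using Finsupp.induction with
  | zero => rw [Finsupp.single_zero, beta_zero, alpha_zero]
  | single_add h b e hhe hb ih =>
    have key : alphaMap s hs (betaMap s hs (Finsupp.single p (Finsupp.single h b)))
        = Finsupp.single p (Finsupp.single h b) := by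
      rw [beta_single, alpha_single]
      refine fsingle_congr (by cases p; rfl) (fsingle_congr ?_ ?_)
      · exact Subtype.ext (by simp; group)
      · exact inv_smul_smul _ _
    rw [Finsupp.single_add, beta_add, alpha_add, ih, key]

lemma alpha_beta (M : ((G ⧸ H) × (G ⧸ H)) →₀ ((↥H) →₀ B)) :
    alphaMap s hs (betaMap s hs M) = M := by
  induction M using Finsupp.induction with
  | zero => rw [beta_zero, alpha_zero]
  | single_add p e M hpM he ihM =>
    rw [beta_add, alpha_add, ihM, alpha_beta_single]

end Beta

section Mul
variable {H : Subgroup G}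

lemma cast_zero {x y z : G ⧸ H} (h : y = z) :
    (h ▸ (0 : HomMod H B x y) : HomMod H B x z) = 0 := by subst h; rfl

lemma cast_add {x y z : G ⧸ H} (h : y = z) (m m' : HomMod H B x y) :
    (h ▸ (m + m') : HomMod H B x z) = h ▸ m + h ▸ m' := by subst h; rfl

lemma cast_single {x y z : G ⧸ H} (h : y = z) (g : {g : G // g • x = y}) (b : B) :
    (h ▸ (Finsupp.single g b) : HomMod H B x z)
      = Finsupp.single ⟨g.1, by rw [g.2, h]⟩ b := by subst h; rfl

lemma amul_zero_left (b : ACat H B) : amul 0 b = 0 := DFinsupp.sum_zero_index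

lemma amul_zero_right (a : ACat H B) : amul a 0 = 0 := by
  unfold amul
  exact (dsum_congr a fun p => DFinsupp.sum_zero_index).trans DFinsupp.sum_zero

lemma amul_add_left (a a' b : ACat H B) :
    amul (a + a') b = amul a b + amul a' b := by
  unfold amul
  apply DFinsupp.sum_add_index
  · intro p
    refine (dsum_congr b fun q => ?_).trans DFinsupp.sum_zero
    delta ACat at *
    split
    · rw [catComp_zero_left, DFinsupp.single_zero]; rfl
    · rfl
  · intro p m m'
    refine (dsum_congr b fun q => ?_).trans DFinsupp.sum_add
    delta ACat at *
    split
    · rw [catComp_add_left, DFinsupp.single_add]; rfl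
    · exact (add_zero _).symm

lemma amul_add_right (a b b' : ACat H B) :
    amul a (b + b') = amul a b + amul a b' := by
  unfold amul
  refine (dsum_congr a fun p => ?_).trans DFinsupp.sum_add
  apply DFinsupp.sum_add_index
  · intro q
    delta ACat at *
    split
    · next h => rw [cast_zero h, catComp_zero_right, DFinsupp.single_zero]; rfl
    · rfl
  · intro q m m'
    delta ACat at *
    split
    · next h => rw [cast_add h, catComp_add_right, DFinsupp.single_add]; rfl
    · exact (add_zero _).symm

lemma amul_single_single (p q : (G ⧸ H) × (G ⧸ H))
    (m : HomMod H B p.1 p.2) (m' : HomMod H B q.1 q.2) :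
    amul (DFinsupp.single p m) (DFinsupp.single q m')
      = if h : q.2 = p.1 then
          DFinsupp.single (q.1, p.2) (catComp m (h ▸ m')) else 0 := by
  unfold amul
  rw [DFinsupp.sum_single_index, DFinsupp.sum_single_index]
  · rfl
  · delta ACat
    split
    · next h => rw [cast_zero h, catComp_zero_right, DFinsupp.single_zero]; rfl
    · rfl
  · refine (dsum_congr _ fun q' => ?_).trans DFinsupp.sum_zero
    delta ACat
    split
    · rw [catComp_zero_left, DFinsupp.single_zero]; rfl
    · rfl

lemma hcMul_zero_left (e : (↥H) →₀ B) : hcMul (B := B) 0 e = 0 :=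
  Finsupp.sum_zero_index

lemma hcMul_zero_right (e : (↥H) →₀ B) : hcMul (B := B) e 0 = 0 := by
  unfold hcMul; simp

lemma hcMul_single_single (h h' : ↥H) (b b' : B) :
    hcMul (Finsupp.single h b) (Finsupp.single h' b')
      = Finsupp.single (h * h') (b * ((h : G) • b')) := by
  unfold hcMul
  rw [Finsupp.sum_single_index, Finsupp.sum_single_index]
  · simp
  · simp

lemma hcMul_add_left (e e' f : (↥H) →₀ B) :
    hcMul (e + e') f = hcMul e f + hcMul e' f := by
  unfold hcMul
  apply Finsupp.sum_add_index' <;> intros <;>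
    simp [add_mul, Finsupp.single_add, Finsupp.sum_add]

lemma hcMul_add_right (e f f' : (↥H) →₀ B) :
    hcMul e (f + f') = hcMul e f + hcMul e f' := by
  unfold hcMul
  rw [← Finsupp.sum_add]
  refine Finsupp.sum_congr fun h _ => ?_
  apply Finsupp.sum_add_index' <;> intros <;>
    simp [mul_add, smul_add, Finsupp.single_add]

lemma matMul_zero_left {S R : Type} [AddCommMonoid R] (mulR : R → R → R)
    (b : (S × S) →₀ R) : matMulGen mulR 0 b = 0 := Finsupp.sum_zero_index

lemma matMul_zero_right {S R : Type} [AddCommMonoid R] (mulR : R → R → R)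
    (hz : ∀ x, mulR x 0 = 0) (a : (S × S) →₀ R) : matMulGen mulR a 0 = 0 := by
  unfold matMulGen; simp

lemma matMul_add_left {S R : Type} [AddCommMonoid R] (mulR : R → R → R)
    (hz : ∀ y, mulR 0 y = 0) (hadd : ∀ x x' y, mulR (x + x') y = mulR x y + mulR x' y)
    (a a' b : (S × S) →₀ R) :
    matMulGen mulR (a + a') b = matMulGen mulR a b + matMulGen mulR a' b := by
  unfold matMulGen
  apply Finsupp.sum_add_index'
  · intro p
    simp [hz]
  · intro p x x'
    rw [← Finsupp.sum_add]
    refine Finsupp.sum_congr fun q _ => ?_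
    split
    · rw [hadd, Finsupp.single_add]
    · rw [add_zero]

lemma matMul_add_right {S R : Type} [AddCommMonoid R] (mulR : R → R → R)
    (hz : ∀ x, mulR x 0 = 0) (hadd : ∀ x y y', mulR x (y + y') = mulR x y + mulR x y')
    (a b b' : (S × S) →₀ R) :
    matMulGen mulR a (b + b') = matMulGen mulR a b + matMulGen mulR a b' := by
  unfold matMulGen
  rw [← Finsupp.sum_add]
  refine Finsupp.sum_congr fun p _ => ?_
  apply Finsupp.sum_add_index'
  · intro q
    simp [hz]
  · intro q y y'
    split
    · rw [hadd, Finsupp.single_add]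
    · rw [add_zero]

lemma matMul_single_single {S R : Type} [AddCommMonoid R] (mulR : R → R → R)
    (hz1 : ∀ y, mulR 0 y = 0) (hz2 : ∀ x, mulR x 0 = 0)
    (p q : S × S) (x y : R) :
    matMulGen mulR (Finsupp.single p x) (Finsupp.single q y)
      = if p.2 = q.1 then Finsupp.single (p.1, q.2) (mulR x y) else 0 := by
  unfold matMulGen
  rw [Finsupp.sum_single_index, Finsupp.sum_single_index]
  · simp [hz2, apply_ite (Finsupp.single _)]
  · simp [hz1, apply_ite (Finsupp.single _)]

end Mul

section MulMain
variable {H : Subgroup G}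

lemma amul_single_single_pos (p1 p2 q1 : G ⧸ H)
    (m : HomMod H B p1 p2) (m' : HomMod H B q1 p1) :
    amul (DFinsupp.single (p1, p2) m) (DFinsupp.single (q1, p1) m')
      = DFinsupp.single (q1, p2) (catComp m m') := by
  rw [amul_single_single, dif_pos rfl]

variable (s : G ⧸ H → G) (hs : ∀ x, QuotientGroup.mk (s x) = x)

lemma alpha_mul_gen (hsm : ∀ (g : G) (a b : B), g • (a * b) = (g • a) * (g • b))
    (p q : (G ⧸ H) × (G ⧸ H)) (g : {g : G // g • p.1 = p.2})
    (g' : {g : G // g • q.1 = q.2}) (b b' : B) :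
    alphaMap s hs (amul (DFinsupp.single p (Finsupp.single g b))
        (DFinsupp.single q (Finsupp.single g' b')))
      = matMulGen hcMul (alphaMap s hs (DFinsupp.single p (Finsupp.single g b)))
          (alphaMap s hs (DFinsupp.single q (Finsupp.single g' b'))) := by
  obtain ⟨p1, p2⟩ := p
  obtain ⟨q1, q2⟩ := q
  by_cases hqp : q2 = p1
  · subst hqp
    rw [amul_single_single_pos, catComp_single_single, alpha_single, alpha_single,
      alpha_single, matMul_single_single hcMul hcMul_zero_left hcMul_zero_right,
      if_pos rfl, hcMul_single_single]
    refine fsingle_congr rfl (fsingle_congr ?_ ?_)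
    · exact Subtype.ext (by simp; group)
    · simp only [hsm, ← mul_smul]
      congr 2
      group
  · rw [amul_single_single, dif_neg hqp]
    erw [alpha_zero]
    rw [alpha_single, alpha_single,
      matMul_single_single hcMul hcMul_zero_left hcMul_zero_right,
      if_neg (fun hc => hqp hc.symm)]

lemma alpha_mul_l4 (hsm : ∀ (g : G) (a b : B), g • (a * b) = (g • a) * (g • b)) (p q : (G ⧸ H) × (G ⧸ H)) (g : {g : G // g • p.1 = p.2}) (b : B)
    (m' : HomMod H B q.1 q.2) :
    alphaMap s hs (amul (DFinsupp.single p (Finsupp.single g b)) (DFinsupp.single q m'))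
      = matMulGen hcMul (alphaMap s hs (DFinsupp.single p (Finsupp.single g b)))
          (alphaMap s hs (DFinsupp.single q m')) := by
  induction m' using Finsupp.induction with
  | zero =>
    rw [ACat.single_zero, amul_zero_right (DFinsupp.single p (Finsupp.single g b)), alpha_zero,
      matMul_zero_right hcMul hcMul_zero_right]
  | single_add g' b' m' _ _ ih =>
    rw [ACat.single_add, amul_add_right (DFinsupp.single p (Finsupp.single g b)), alpha_add, ih, alpha_add,
      matMul_add_right hcMul hcMul_zero_right hcMul_add_right, alpha_mul_gen s hs hsm]

lemma alpha_mul_l3 (hsm : ∀ (g : G) (a b : B), g • (a * b) = (g • a) * (g • b)) (p q : (G ⧸ H) × (G ⧸ H)) (m : HomMod H B p.1 p.2)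
    (m' : HomMod H B q.1 q.2) :
    alphaMap s hs (amul (DFinsupp.single p m) (DFinsupp.single q m'))
      = matMulGen hcMul (alphaMap s hs (DFinsupp.single p m))
          (alphaMap s hs (DFinsupp.single q m')) := by
  induction m using Finsupp.induction with
  | zero =>
    rw [ACat.single_zero, amul_zero_left (DFinsupp.single q m'), alpha_zero, matMul_zero_left]
  | single_add g b m _ _ ih =>
    rw [ACat.single_add, amul_add_left _ _ (DFinsupp.single q m'), alpha_add, ih, alpha_add,
      matMul_add_left hcMul hcMul_zero_left hcMul_add_left, alpha_mul_l4 s hs hsm]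

lemma alpha_mul_l2 (hsm : ∀ (g : G) (a b : B), g • (a * b) = (g • a) * (g • b)) (p : (G ⧸ H) × (G ⧸ H)) (m : HomMod H B p.1 p.2) (b : ACat H B) :
    alphaMap s hs (amul (DFinsupp.single p m) b)
      = matMulGen hcMul (alphaMap s hs (DFinsupp.single p m)) (alphaMap s hs b) := by
  induction b using ACat.induction with
  | h0 =>
    rw [amul_zero_right (DFinsupp.single p m), alpha_zero, matMul_zero_right hcMul hcMul_zero_right]
  | ha q m' f _ _ ih =>
    rw [amul_add_right (DFinsupp.single p m), alpha_add, ih, alpha_add,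
      matMul_add_right hcMul hcMul_zero_right hcMul_add_right, alpha_mul_l3 s hs hsm]

lemma alpha_mul (hsm : ∀ (g : G) (a b : B), g • (a * b) = (g • a) * (g • b)) (a b : ACat H B) :
    alphaMap s hs (amul a b)
      = matMulGen hcMul (alphaMap s hs a) (alphaMap s hs b) := by
  induction a using ACat.induction with
  | h0 => rw [amul_zero_left, alpha_zero, matMul_zero_left]
  | ha p m f _ _ ih =>
    rw [amul_add_left, alpha_add, ih, alpha_add,
      matMul_add_left hcMul hcMul_zero_left hcMul_add_left, alpha_mul_l2 s hs hsm]

end MulMain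

/-- `α` is an isomorphism of `ℓ`-algebras. -/
theorem stmt9 {H : Subgroup G} (s : G ⧸ H → G)
    (hs : ∀ x, QuotientGroup.mk (s x) = x)
    (hs1 : s (QuotientGroup.mk 1) = 1)
    (hsm : ∀ (g : G) (a b : B), g • (a * b) = (g • a) * (g • b))
    (hact : ∀ (g : G) (c : ℓ) (b : B), g • (c • b) = c • (g • b)) :
    Function.Bijective (alphaMap (B := B) s hs) ∧
    (∀ a b : ACat H B, alphaMap s hs (a + b) = alphaMap s hs a + alphaMap s hs b) ∧
    (∀ (c : ℓ) (a : ACat H B), alphaMap s hs (c • a) = c • alphaMap s hs a) ∧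
    (∀ a b : ACat H B,
      alphaMap s hs (amul a b) =
        matMulGen hcMul (alphaMap s hs a) (alphaMap s hs b)) := by
  refine ⟨?_, alpha_add s hs, alpha_smul s hs hact, ?_⟩
  · exact Function.bijective_iff_has_inverse.mpr
      ⟨betaMap s hs, beta_alpha s hs, alpha_beta s hs⟩
  · exact alpha_mul s hs hsm
end
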